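/- The rational function T(u₁,u₂,u₃,u₄,u₅) = (u₁u₂u₅² + u₁²u₄u₅ + u₃u₄²u₅ + u₂²u₃u₅ + u₁u₂u₄² + u₂²u₄u₅ + u₁u₂u₃² + u₁²u₃u₅ + u₃²u₄u₅)/(u₁u₂u₃u₄) is invariant under the mutation μ₁(a,b,c,d,e) = (b, (b²+cd)/a, c, d, e): T(μ₁(a,b,c,d,e)) = T(a,b,c,d,e) for all nonzero a,b,c,d,e in a field of characteristic 0. -/

import Mathlib

/-- The boundary-loop invariant of the once-marked torus minus a disk. -/
noncomputable def torusT {K : Type*} [Field K] (u₁ u₂ u₃ u₄ u₅ : K) : K :=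
  (u₁ * u₂ * u₅ ^ 2 + u₁ ^ 2 * u₄ * u₅ + u₃ * u₄ ^ 2 * u₅ + u₂ ^ 2 * u₃ * u₅
      + u₁ * u₂ * u₄ ^ 2 + u₂ ^ 2 * u₄ * u₅ + u₁ * u₂ * u₃ ^ 2 + u₁ ^ 2 * u₃ * u₅
      + u₃ ^ 2 * u₄ * u₅) / (u₁ * u₂ * u₃ * u₄)

/-- `torusT` is invariant under the mutation `μ₁(a,b,c,d,e) = (b, (b²+cd)/a, c, d, e)`. -/
theorem torus_invariant_mu1 {K : Type*} [Field K] [CharZero K]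
    (a b c d e : K) (ha : a ≠ 0) (hb : b ≠ 0) (hc : c ≠ 0) (hd : d ≠ 0) (he : e ≠ 0)
    (h : b ^ 2 + c * d ≠ 0) :
    torusT b ((b ^ 2 + c * d) / a) c d e = torusT a b c d e := by
  have hx : (b ^ 2 + c * d) / a ≠ 0 := div_ne_zero h ha
  have hax : a * ((b ^ 2 + c * d) / a) = b ^ 2 + c * d := mul_div_cancel₀ _ ha
  set x := (b ^ 2 + c * d) / a with hxdef
  clear_value x
  unfold torusT
  field_simp
  linear_combination (e * (c + d) * (x - a)) * hax
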